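/- Let h : E × E → E be a C^1 two-point flux that is symmetric (h(a,b) = h(b,a) for all a, b) and consistent with f : E → E (h(a,a) = f(a) for all a). Then f is differentiable, and for every a ∈ E the Fréchet derivative of the map b ↦ h(a,b) at the point b = a equals (1/2) • (fderiv ℝ f a). -/

import Mathlib

/-- For a `C¹` symmetric two-point flux `h` consistent with `f`, the flux function `f`
is differentiable and the Fréchet derivative of `b ↦ h(a,b)` at `b = a` equals
`(1/2) • fderiv ℝ f a`. -/
theorem symmetric_consistent_flux_derivative
    (N : ℕ) (hN : 1 ≤ N)
    (h : EuclideanSpace ℝ (Fin N) × EuclideanSpace ℝ (Fin N) → EuclideanSpace ℝ (Fin N))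
    (hC1 : ContDiff ℝ 1 h)
    (hsym : ∀ a b, h (a, b) = h (b, a))
    (f : EuclideanSpace ℝ (Fin N) → EuclideanSpace ℝ (Fin N))
    (hcons : ∀ a, h (a, a) = f a) :
    Differentiable ℝ f ∧
      ∀ a, fderiv ℝ (fun b => h (a, b)) a = (1 / 2 : ℝ) • fderiv ℝ f a := by
  have hd : Differentiable ℝ h := hC1.differentiable one_ne_zero
  have key : ∀ a : EuclideanSpace ℝ (Fin N), HasFDerivAt f
      ((fderiv ℝ h (a, a)).comp ((ContinuousLinearMap.id ℝ (EuclideanSpace ℝ (Fin N))).prod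
        (ContinuousLinearMap.id ℝ (EuclideanSpace ℝ (Fin N))))) a := by
    intro a
    have hdiag : HasFDerivAt (fun x : EuclideanSpace ℝ (Fin N) => (x, x))
        ((ContinuousLinearMap.id ℝ (EuclideanSpace ℝ (Fin N))).prod
          (ContinuousLinearMap.id ℝ (EuclideanSpace ℝ (Fin N)))) a :=
      HasFDerivAt.prodMk (hasFDerivAt_id a) (hasFDerivAt_id a)
    have hc : HasFDerivAt (h ∘ fun x : EuclideanSpace ℝ (Fin N) => (x, x))
        ((fderiv ℝ h (a, a)).comp ((ContinuousLinearMap.id ℝ (EuclideanSpace ℝ (Fin N))).prod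
          (ContinuousLinearMap.id ℝ (EuclideanSpace ℝ (Fin N))))) a :=
      HasFDerivAt.comp (f := fun x : EuclideanSpace ℝ (Fin N) => (x, x)) a (hd (a, a)).hasFDerivAt hdiag
    exact hc.congr_of_eventuallyEq (Filter.Eventually.of_forall fun x => (hcons x).symm)
  refine ⟨fun a => (key a).differentiableAt, fun a => ?_⟩
  set D := fderiv ℝ h (a, a) with hD
  have hmk2 : HasFDerivAt (fun b : EuclideanSpace ℝ (Fin N) => (a, b))
      ((0 : EuclideanSpace ℝ (Fin N) →L[ℝ] EuclideanSpace ℝ (Fin N)).prod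
        (ContinuousLinearMap.id ℝ (EuclideanSpace ℝ (Fin N)))) a :=
    HasFDerivAt.prodMk (hasFDerivAt_const a a) (hasFDerivAt_id a)
  have hmk1 : HasFDerivAt (fun b : EuclideanSpace ℝ (Fin N) => (b, a))
      ((ContinuousLinearMap.id ℝ (EuclideanSpace ℝ (Fin N))).prod
        (0 : EuclideanSpace ℝ (Fin N) →L[ℝ] EuclideanSpace ℝ (Fin N))) a :=
    HasFDerivAt.prodMk (hasFDerivAt_id a) (hasFDerivAt_const a a)
  have h2 : HasFDerivAt (h ∘ fun b : EuclideanSpace ℝ (Fin N) => (a, b))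
      (D.comp ((0 : EuclideanSpace ℝ (Fin N) →L[ℝ] EuclideanSpace ℝ (Fin N)).prod
        (ContinuousLinearMap.id ℝ (EuclideanSpace ℝ (Fin N))))) a :=
    (hd (a, a)).hasFDerivAt.comp a hmk2
  have h1 : HasFDerivAt (h ∘ fun b : EuclideanSpace ℝ (Fin N) => (b, a))
      (D.comp ((ContinuousLinearMap.id ℝ (EuclideanSpace ℝ (Fin N))).prod
        (0 : EuclideanSpace ℝ (Fin N) →L[ℝ] EuclideanSpace ℝ (Fin N)))) a :=
    HasFDerivAt.comp (f := fun b : EuclideanSpace ℝ (Fin N) => (b, a)) a (hd (a, a)).hasFDerivAt hmk1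
  have h2' : HasFDerivAt (fun b => h (a, b))
      (D.comp ((0 : EuclideanSpace ℝ (Fin N) →L[ℝ] EuclideanSpace ℝ (Fin N)).prod
        (ContinuousLinearMap.id ℝ (EuclideanSpace ℝ (Fin N))))) a := h2
  have h1' : HasFDerivAt (fun b => h (b, a))
      (D.comp ((ContinuousLinearMap.id ℝ (EuclideanSpace ℝ (Fin N))).prod
        (0 : EuclideanSpace ℝ (Fin N) →L[ℝ] EuclideanSpace ℝ (Fin N)))) a := h1
  have heq : D.comp ((ContinuousLinearMap.id ℝ (EuclideanSpace ℝ (Fin N))).prod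
        (0 : EuclideanSpace ℝ (Fin N) →L[ℝ] EuclideanSpace ℝ (Fin N)))
      = D.comp ((0 : EuclideanSpace ℝ (Fin N) →L[ℝ] EuclideanSpace ℝ (Fin N)).prod
        (ContinuousLinearMap.id ℝ (EuclideanSpace ℝ (Fin N)))) := by
    have hfun : (fun b => h (b, a)) = fun b => h (a, b) := funext fun b => hsym b a
    rw [← h1'.fderiv, hfun, h2'.fderiv]
  rw [h2'.fderiv, (key a).fderiv]
  refine ContinuousLinearMap.ext fun x => ?_
  have hsplit : D (x, x) = D (x, 0) + D (0, x) := by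
    rw [← map_add]; norm_num
  have heqx : D (x, 0) = D (0, x) := by
    have := congrFun (congrArg DFunLike.coe heq) x
    simpa using this
  simp only [ContinuousLinearMap.coe_comp', Function.comp_apply,
    ContinuousLinearMap.smul_apply, ContinuousLinearMap.prod_apply,
    ContinuousLinearMap.coe_id', id_eq, ContinuousLinearMap.zero_apply]
  rw [hsplit, ← heqx]
  module
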